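/- arXiv:1309.6911 — 4 statements merged into one kernel-verified Lean document; each statement's English description precedes it below -/
import Mathlib

section
/- If a and b are Moore-Penrose invertible elements of a C*-algebra and (a,b) doubly commutes, then ab is Moore-Penrose invertible and (ab)† = b†a†. -/
/-- `b` satisfies the four Penrose equations for `a`. -/
def IsMP {R : Type*} [Ring R] [StarRing R] (a b : R) : Prop :=
  a * b * a = a ∧ b * a * b = b ∧ star (b * a) = b * a ∧ star (a * b) = a * b

/-- If `a` has MP inverse `ad` and `b` doubly commutes with `a`, then `ad` commutes with `b`. -/
lemma mp_comm {R : Type*} [Ring R] [StarRing R] {a ad b : R} (h : IsMP a ad)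
    (h1 : a * b = b * a) (h2 : star a * b = b * star a) : ad * b = b * ad := by
  obtain ⟨e1, e2, e3, e4⟩ := h
  have k1 : ad * a * star a = star a := by
    rw [← e3, ← star_mul, ← mul_assoc, e1]
  have k1g : ∀ x : R, ad * (a * (star a * x)) = star a * x := by
    intro x; simp only [← mul_assoc]; rw [k1]
  have k2p : star a * (a * ad) = star a := by
    rw [← e4, ← star_mul, e1]
  have k3 : star a * (star ad * ad) = ad := by
    rw [← mul_assoc, ← star_mul, e3, e2]
  have k4 : ad * star ad * star a = ad := by
    rw [mul_assoc, ← star_mul, e4, ← mul_assoc, e2]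
  have k4g : ∀ x : R, ad * (star ad * (star a * x)) = ad * x := by
    intro x; simp only [← mul_assoc]; rw [k4]
  have h1rg : ∀ x : R, b * (a * x) = a * (b * x) := by
    intro x; rw [← mul_assoc, ← h1, mul_assoc]
  have h2rg : ∀ x : R, b * (star a * x) = star a * (b * x) := by
    intro x; rw [← mul_assoc, ← h2, mul_assoc]
  have phase2 : ad * (a * (b * ad)) = b * ad := by
    conv_lhs => rw [show (ad:R) * (a * (b * ad)) = ad * (a * (b * (star a * (star ad * ad)))) by
      rw [k3]]
    rw [h2rg, k1g, ← h2rg, k3]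
  calc ad * b = ad * (star ad * (star a * b)) := (k4g b).symm
    _ = ad * (star ad * (b * star a)) := by rw [h2]
    _ = ad * (star ad * (b * (star a * (a * ad)))) := by rw [k2p]
    _ = ad * (star ad * (star a * (b * (a * ad)))) := by rw [h2rg]
    _ = ad * (star ad * (star a * (a * (b * ad)))) := by rw [h1rg]
    _ = ad * (a * (b * ad)) := k4g _
    _ = b * ad := phase2

variable {A : Type*} [NormedRing A] [StarRing A] [CStarRing A] [CompleteSpace A]
  [NormedAlgebra ℂ A] [StarModule ℂ A]

theorem stmt8 (a ad b bd : A) (ha : IsMP a ad) (hb : IsMP b bd)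
    (h1 : a * b = b * a) (h2 : a * star b = star b * a) :
    IsMP (a * b) (bd * ad) := by
  obtain ⟨a1, a2, a3, a4⟩ := ha
  obtain ⟨b1, b2, b3, b4⟩ := hb
  -- derived commutation relations
  have h2' : star a * b = b * star a := by
    have := congrArg star h2
    simpa [star_mul] using this.symm
  have h1s : star a * star b = star b * star a := by
    have := congrArg star h1
    simpa [star_mul] using this.symm
  have c1 : ad * b = b * ad := mp_comm ⟨a1, a2, a3, a4⟩ h1 h2'
  have c2 : ad * star b = star b * ad := mp_comm ⟨a1, a2, a3, a4⟩ h2 h1s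
  have c3 : bd * a = a * bd := mp_comm ⟨b1, b2, b3, b4⟩ h1.symm h2.symm
  have c5 : bd * ad = ad * bd := mp_comm ⟨b1, b2, b3, b4⟩ c1.symm c2.symm
  -- sorting rules
  have s1 : b * a = a * b := h1.symm
  have s1g : ∀ x : A, b * (a * x) = a * (b * x) := fun x => by
    rw [← mul_assoc, s1, mul_assoc]
  have s2 : b * ad = ad * b := c1.symm
  have s2g : ∀ x : A, b * (ad * x) = ad * (b * x) := fun x => by
    rw [← mul_assoc, s2, mul_assoc]
  have s3 : bd * a = a * bd := c3
  have s3g : ∀ x : A, bd * (a * x) = a * (bd * x) := fun x => by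
    rw [← mul_assoc, s3, mul_assoc]
  have s4 : bd * ad = ad * bd := c5
  have s4g : ∀ x : A, bd * (ad * x) = ad * (bd * x) := fun x => by
    rw [← mul_assoc, s4, mul_assoc]
  -- reduction rules
  have r1 : a * (ad * a) = a := by rw [← mul_assoc, a1]
  have r1g : ∀ x : A, a * (ad * (a * x)) = a * x := fun x => by
    simp only [← mul_assoc]; rw [a1]
  have r2 : ad * (a * ad) = ad := by rw [← mul_assoc, a2]
  have r2g : ∀ x : A, ad * (a * (ad * x)) = ad * x := fun x => by
    simp only [← mul_assoc]; rw [a2]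
  have r3 : b * (bd * b) = b := by rw [← mul_assoc, b1]
  have r3g : ∀ x : A, b * (bd * (b * x)) = b * x := fun x => by
    simp only [← mul_assoc]; rw [b1]
  have r4 : bd * (b * bd) = bd := by rw [← mul_assoc, b2]
  have r4g : ∀ x : A, bd * (b * (bd * x)) = bd * x := fun x => by
    simp only [← mul_assoc]; rw [b2]
  refine ⟨?_, ?_, ?_, ?_⟩
  · simp only [mul_assoc, s1, s1g, s2, s2g, s3, s3g, s4, s4g, r1, r1g, r2, r2g, r3, r3g, r4, r4g]
  · simp only [mul_assoc, s1, s1g, s2, s2g, s3, s3g, s4, s4g, r1, r1g, r2, r2g, r3, r3g, r4, r4g]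
  · have key : bd * ad * (a * b) = (ad * a) * (bd * b) := by
      simp only [mul_assoc, s1, s1g, s2, s2g, s3, s3g, s4, s4g]
    rw [key, star_mul, a3, b3]
    simp only [mul_assoc, s1, s1g, s2, s2g, s3, s3g, s4, s4g]
  · have key : a * b * (bd * ad) = (a * ad) * (b * bd) := by
      simp only [mul_assoc, s1, s1g, s2, s2g, s3, s3g, s4, s4g]
    rw [key, star_mul, a4, b4]
    simp only [mul_assoc, s1, s1g, s2, s2g, s3, s3g, s4, s4g]
end

section
/- If a and b are Moore-Penrose invertible elements of a C*-algebra and (a,b) doubly commutes, then (ab)† = b†a† = a†b† = (ba)†. -/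
section Aux

set_option linter.unusedSectionVars false

variable {R : Type*} [Ring R] [StarRing R]

/-- swap helper -/
private lemma sw {x y : R} (h : x * y = y * x) (z : R) : x * (y * z) = y * (x * z) := by
  rw [← mul_assoc, h, mul_assoc]

/-- merge helper -/
private lemma mg {x y u v : R} (h : x * y = u * v) (z : R) : x * (y * z) = u * (v * z) := by
  rw [← mul_assoc, h, mul_assoc]

/-- If `y` is a group inverse of `c` and `x` commutes with `c`, then `x` commutes with `y`. -/
private lemma grp_comm {c y x : R} (h1 : c * y = y * c) (h2 : y * c * y = y)
    (h3 : c * y * c = c) (hx : x * c = c * x) : x * y = y * x := by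
  have hyp : y * (c * y) = y := by rw [← mul_assoc]; exact h2
  -- x * p = p * (x * p)
  have hA : x * (c * y) = (c * y) * (x * (c * y)) := by
    calc x * (c * y) = (x * c) * y := by noncomm_ring
      _ = (c * x) * y := by rw [hx]
      _ = ((c * y * c) * x) * y := by rw [h3]
      _ = (c * y) * ((c * x) * y) := by noncomm_ring
      _ = (c * y) * ((x * c) * y) := by rw [hx]
      _ = (c * y) * (x * (c * y)) := by noncomm_ring
  -- p * x = (p * x) * p
  have hB : (c * y) * x = ((c * y) * x) * (c * y) := by
    calc (c * y) * x = (y * c) * x := by rw [h1]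
      _ = y * (c * x) := by noncomm_ring
      _ = y * (x * c) := by rw [hx]
      _ = y * (x * (c * y * c)) := by rw [h3]
      _ = (y * (x * c)) * (y * c) := by noncomm_ring
      _ = (y * (c * x)) * (y * c) := by rw [hx]
      _ = ((y * c) * x) * (y * c) := by noncomm_ring
      _ = ((c * y) * x) * (c * y) := by rw [h1]
  have hxp : x * (c * y) = (c * y) * x := by
    calc x * (c * y) = (c * y) * (x * (c * y)) := hA
      _ = ((c * y) * x) * (c * y) := by noncomm_ring
      _ = (c * y) * x := hB.symm
  calc x * y = x * ((c * y) * y) := by rw [h1, h2]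
    _ = (x * (c * y)) * y := by noncomm_ring
    _ = ((c * y) * x) * y := by rw [hxp]
    _ = ((y * c) * x) * y := by rw [h1]
    _ = y * ((c * x) * y) := by noncomm_ring
    _ = y * ((x * c) * y) := by rw [hx]
    _ = y * (x * (c * y)) := by noncomm_ring
    _ = y * ((c * y) * x) := by rw [hxp]
    _ = (y * (c * y)) * x := by noncomm_ring
    _ = y * x := by rw [hyp]

/-- If `x` commutes with `a` and `star a`, it commutes with any MP inverse of `a`. -/
private lemma mp_comm_s9 {a ad x : R} (ha : IsMP a ad)
    (hx1 : x * a = a * x) (hx2 : x * star a = star a * x) : x * ad = ad * x := by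
  obtain ⟨e1, e2, e3, e4⟩ := ha
  have k3 : star a * star ad = ad * a := by rw [← star_mul]; exact e3
  have k4 : star ad * star a = a * ad := by rw [← star_mul]; exact e4
  have h1 : (star a * a) * (ad * star ad) = ad * a := by
    calc (star a * a) * (ad * star ad) = star a * ((a * ad) * star ad) := by noncomm_ring
      _ = star a * ((star ad * star a) * star ad) := by rw [k4]
      _ = (star a * star ad) * (star a * star ad) := by noncomm_ring
      _ = (ad * a) * (ad * a) := by rw [k3]
      _ = ad * (a * ad * a) := by noncomm_ring
      _ = ad * a := by rw [e1]
  have h1' : (ad * star ad) * (star a * a) = ad * a := by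
    calc (ad * star ad) * (star a * a) = ad * ((star ad * star a) * a) := by noncomm_ring
      _ = ad * ((a * ad) * a) := by rw [k4]
      _ = ad * (a * ad * a) := by noncomm_ring
      _ = ad * a := by rw [e1]
  have h2 : (ad * star ad) * (star a * a) * (ad * star ad) = ad * star ad := by
    rw [h1']
    calc (ad * a) * (ad * star ad) = (ad * a * ad) * star ad := by noncomm_ring
      _ = ad * star ad := by rw [e2]
  have h3 : (star a * a) * (ad * star ad) * (star a * a) = star a * a := by
    rw [h1]
    calc (ad * a) * (star a * a) = ((star a * star ad) * star a) * a := by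
          rw [k3]; noncomm_ring
      _ = (star a * (star ad * star a)) * a := by noncomm_ring
      _ = (star a * (a * ad)) * a := by rw [k4]
      _ = star a * (a * ad * a) := by noncomm_ring
      _ = star a * a := by rw [e1]
  have hxc : x * (star a * a) = (star a * a) * x := by
    calc x * (star a * a) = (x * star a) * a := by noncomm_ring
      _ = (star a * x) * a := by rw [hx2]
      _ = star a * (x * a) := by noncomm_ring
      _ = star a * (a * x) := by rw [hx1]
      _ = (star a * a) * x := by noncomm_ring
  have hxy : x * (ad * star ad) = (ad * star ad) * x :=
    grp_comm (h1.trans h1'.symm) h2 h3 hxc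
  have hady : (ad * star ad) * star a = ad := by
    calc (ad * star ad) * star a = ad * (star ad * star a) := by noncomm_ring
      _ = ad * (a * ad) := by rw [k4]
      _ = ad * a * ad := by noncomm_ring
      _ = ad := by rw [e2]
  calc x * ad = x * ((ad * star ad) * star a) := by rw [hady]
    _ = (x * (ad * star ad)) * star a := by noncomm_ring
    _ = ((ad * star ad) * x) * star a := by rw [hxy]
    _ = (ad * star ad) * (x * star a) := by noncomm_ring
    _ = (ad * star ad) * (star a * x) := by rw [hx2]
    _ = ((ad * star ad) * star a) * x := by noncomm_ring
    _ = ad * x := by rw [hady]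

/-- MP inverse of a product of a doubly commuting pair. -/
private lemma isMP_mul {a ad b bd : R} (ha : IsMP a ad) (hb : IsMP b bd)
    (h_ab : a * b = b * a) (h_abd : a * bd = bd * a)
    (h_adb : ad * b = b * ad) (h_adbd : ad * bd = bd * ad)
    (h_sab : star a * b = b * star a) (h_sabd : star a * bd = bd * star a)
    (h_sba : star b * a = a * star b) (h_sbad : star b * ad = ad * star b) :
    IsMP (a * b) (bd * ad) := by
  have hbb : b * (bd * b) = b := by rw [← mul_assoc, hb.1]
  have haa : ad * (a * ad) = ad := by rw [← mul_assoc, ha.2.1]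
  refine ⟨?_, ?_, ?_, ?_⟩
  · calc a * b * (bd * ad) * (a * b) = a * (b * (bd * (ad * (a * b)))) := by
          noncomm_ring
      _ = a * (b * (ad * (bd * (a * b)))) := by rw [sw h_adbd.symm]
      _ = a * (ad * (b * (bd * (a * b)))) := by rw [sw h_adb.symm]
      _ = a * (ad * (b * (a * (bd * b)))) := by rw [sw h_abd.symm]
      _ = a * (ad * (a * (b * (bd * b)))) := by rw [sw h_ab.symm]
      _ = (a * ad * a) * (b * (bd * b)) := by noncomm_ring
      _ = a * (b * (bd * b)) := by rw [ha.1]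
      _ = a * b := by rw [hbb]
  · calc bd * ad * (a * b) * (bd * ad) = bd * (ad * (a * (b * (bd * ad)))) := by
          noncomm_ring
      _ = bd * (ad * (b * (a * (bd * ad)))) := by rw [sw h_ab]
      _ = bd * (b * (ad * (a * (bd * ad)))) := by rw [sw h_adb]
      _ = bd * (b * (ad * (bd * (a * ad)))) := by rw [sw h_abd]
      _ = bd * (b * (bd * (ad * (a * ad)))) := by rw [sw h_adbd]
      _ = (bd * b * bd) * (ad * (a * ad)) := by noncomm_ring
      _ = bd * (ad * (a * ad)) := by rw [hb.2.1]
      _ = bd * ad := by rw [haa]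
  · have key1 : star a * star ad = ad * a := by rw [← star_mul]; exact ha.2.2.1
    have key2 : star b * star bd = bd * b := by rw [← star_mul]; exact hb.2.2.1
    have rhs : bd * ad * (a * b) = ad * (a * (bd * b)) := by
      calc bd * ad * (a * b) = bd * (ad * (a * b)) := by noncomm_ring
        _ = ad * (bd * (a * b)) := by rw [sw h_adbd.symm]
        _ = ad * (a * (bd * b)) := by rw [sw h_abd.symm]
    calc star (bd * ad * (a * b))
        = star b * (star a * (star ad * star bd)) := by simp only [star_mul, mul_assoc]
      _ = star b * (ad * (a * star bd)) := by rw [mg key1]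
      _ = ad * (star b * (a * star bd)) := by rw [sw h_sbad]
      _ = ad * (a * (star b * star bd)) := by rw [sw h_sba]
      _ = ad * (a * (bd * b)) := by rw [key2]
      _ = bd * ad * (a * b) := rhs.symm
  · have key3 : star ad * star a = a * ad := by rw [← star_mul]; exact ha.2.2.2
    have key4 : star bd * star b = b * bd := by rw [← star_mul]; exact hb.2.2.2
    have rhs : a * b * (bd * ad) = a * (ad * (b * bd)) := by
      calc a * b * (bd * ad) = a * (b * (bd * ad)) := by noncomm_ring
        _ = a * (b * (ad * bd)) := by rw [← h_adbd]
        _ = a * (ad * (b * bd)) := by rw [sw h_adb.symm]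
    calc star (a * b * (bd * ad))
        = star ad * (star bd * (star b * star a)) := by simp only [star_mul, mul_assoc]
      _ = star ad * (b * (bd * star a)) := by rw [mg key4]
      _ = star ad * (b * (star a * bd)) := by rw [← h_sabd]
      _ = star ad * (star a * (b * bd)) := by rw [sw h_sab.symm]
      _ = a * (ad * (b * bd)) := by rw [mg key3]
      _ = a * b * (bd * ad) := rhs.symm
end Aux

variable {A : Type*} [NormedRing A] [StarRing A] [CStarRing A] [CompleteSpace A]
  [NormedAlgebra ℂ A] [StarModule ℂ A]

theorem stmt9 (a ad b bd : A) (ha : IsMP a ad) (hb : IsMP b bd)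
    (h1 : a * b = b * a) (h2 : a * star b = star b * a) :
    IsMP (a * b) (bd * ad) ∧ bd * ad = ad * bd ∧ IsMP (b * a) (ad * bd) := by
  -- star versions of the hypotheses
  have c_sab : star a * b = b * star a := by
    have := congrArg star h2
    simp only [star_mul, star_star] at this
    exact this.symm
  have c_sasb : star a * star b = star b * star a := by
    have := congrArg star h1
    simp only [star_mul] at this
    exact this.symm
  -- b, star b commute with ad
  have c_bad : b * ad = ad * b := mp_comm_s9 ha h1.symm c_sab.symm
  have c_sbad : star b * ad = ad * star b := mp_comm_s9 ha h2.symm c_sasb.symm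
  -- b, star b commute with star ad
  have c_bsad : b * star ad = star ad * b := by
    have := congrArg star c_sbad
    simp only [star_mul, star_star] at this
    exact this.symm
  have c_sbsad : star b * star ad = star ad * star b := by
    have := congrArg star c_bad
    simp only [star_mul, star_star] at this
    exact this.symm
  -- a, star a, ad, star ad commute with bd
  have c_abd : a * bd = bd * a := mp_comm_s9 hb h1 h2
  have c_sabd : star a * bd = bd * star a := mp_comm_s9 hb c_sab c_sasb
  have c_adbd : ad * bd = bd * ad := mp_comm_s9 hb c_bad.symm c_sbad.symm
  refine ⟨isMP_mul ha hb h1 c_abd c_bad.symm c_adbd c_sab c_sabd h2.symm c_sbad,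
    c_adbd.symm,
    isMP_mul hb ha h1.symm c_bad c_abd.symm c_adbd.symm h2.symm c_sbad c_sab c_sabd⟩
end

section
/- Let a and b be elements of a C*-algebra such that ab, ba, a*b, and ba* are Moore-Penrose invertible with (ab)† = (ba)† and (a*b)† = (ba*)†. Then (a,b) is a doubly commuting pair: ab = ba and a*b = ba*. -/
/-- Uniqueness of the Moore-Penrose inverse in a *-ring. -/
lemma mp_unique {R : Type*} [Ring R] [StarRing R] {a p q : R}
    (hp : IsMP a p) (hq : IsMP a q) : p = q := by
  obtain ⟨hp1, hp2, hp3, hp4⟩ := hp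
  obtain ⟨hq1, hq2, hq3, hq4⟩ := hq
  have hap : a * p = a * q := by
    calc a * p = (a * q * a) * p := by rw [hq1]
      _ = star (a * q) * star (a * p) := by rw [hq4, hp4]; noncomm_ring
      _ = star (a * p * (a * q)) := by simp [star_mul, mul_assoc]
      _ = star ((a * p * a) * q) := by noncomm_ring
      _ = star (a * q) := by rw [hp1]
      _ = a * q := hq4
  have hpa : p * a = q * a := by
    calc p * a = p * (a * q * a) := by rw [hq1]
      _ = star (p * a) * star (q * a) := by rw [hq3, hp3]; noncomm_ring
      _ = star (q * a * (p * a)) := by simp [star_mul, mul_assoc]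
      _ = star (q * (a * p * a)) := by noncomm_ring
      _ = star (q * a) := by rw [hp1]
      _ = q * a := hq3
  calc p = p * a * p := hp2.symm
    _ = p * (a * q) := by rw [← hap]; noncomm_ring
    _ = q * a * q := by rw [← mul_assoc, hpa]
    _ = q := hq2

lemma mp_symm {R : Type*} [Ring R] [StarRing R] {a b : R} (h : IsMP a b) : IsMP b a :=
  ⟨h.2.1, h.1, h.2.2.2, h.2.2.1⟩

variable {A : Type*} [NormedRing A] [StarRing A] [CStarRing A] [CompleteSpace A]
  [NormedAlgebra ℂ A] [StarModule ℂ A]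

theorem stmt11 (a b x y : A) (h1 : IsMP (a * b) x) (h2 : IsMP (b * a) x)
    (h3 : IsMP (star a * b) y) (h4 : IsMP (b * star a) y) :
    a * b = b * a ∧ star a * b = b * star a := by
  exact ⟨mp_unique (mp_symm h1) (mp_symm h2), mp_unique (mp_symm h3) (mp_symm h4)⟩
end

section
/- If a and b are Moore-Penrose invertible elements of a C*-algebra with (a,b) doubly commuting, then (a*b)† = b†(a†)* = (a†)*b† = (ba*)†. -/
set_option linter.unusedSectionVars false

section helpers
variable {R : Type*} [Ring R] [StarRing R]

private lemma lcomm {x y : R} (h : x * y = y * x) (t : R) :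
    x * (y * t) = y * (x * t) := by rw [← mul_assoc, h, mul_assoc]

private lemma two' {u v p q : R} (h : u * v = p * q) (t : R) :
    u * (v * t) = p * (q * t) := by rw [← mul_assoc, h, mul_assoc]

private lemma tri {u v w r : R} (h : u * v * w = r) (t : R) :
    u * (v * (w * t)) = r * t := by rw [← mul_assoc, ← mul_assoc, h]

private lemma tri' {u v w r : R} (h : u * v * w = r) :
    u * (v * w) = r := by rw [← mul_assoc, h]

private lemma isMP_star {a y : R} (h : IsMP a y) : IsMP (star a) (star y) := by
  obtain ⟨h1, h2, h3, h4⟩ := h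
  refine ⟨?_, ?_, ?_, ?_⟩
  · calc star a * star y * star a = star (a * y * a) := by
          simp only [star_mul, mul_assoc]
      _ = star a := by rw [h1]
  · calc star y * star a * star y = star (y * a * y) := by
          simp only [star_mul, mul_assoc]
      _ = star y := by rw [h2]
  · rw [← star_mul, star_star, h4]
  · rw [← star_mul, star_star, h3]

private lemma comm_mp {a y x : R} (h : IsMP a y)
    (hx1 : x * a = a * x) (hx2 : x * star a = star a * x) : x * y = y * x := by
  have hst := isMP_star h
  obtain ⟨ha1, ha2, ha3, ha4⟩ := h
  have hS3 : star a * star y = y * a := by rw [← star_mul, ha3]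
  have hS4 : star y * star a = a * y := by rw [← star_mul, ha4]
  set c := star a * a with hc
  set d := y * star y with hd
  have hdc : d * c = y * a := by
    rw [hd, hc, mul_assoc, ← mul_assoc (star y), hS4, ← mul_assoc, ← mul_assoc, ha2]
  have hcd : c * d = y * a := by
    rw [hd, hc, mul_assoc, ← mul_assoc a y, ← hS4, mul_assoc (star y),
      ← mul_assoc, ← mul_assoc, hst.1, hS3]
  have hce : c * (y * a) = c := by
    rw [hc, mul_assoc, ← mul_assoc a y a, ha1]
  have hed : (y * a) * d = d := by
    rw [hd, mul_assoc, ← mul_assoc a y, ← mul_assoc, ← mul_assoc, ha2]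
  have hde : d * (y * a) = d := by
    rw [← hcd, ← mul_assoc, hdc]; exact hed
  have hddc : d * (d * c) = d := by rw [hdc]; exact hde
  have hdd2 : d * d * c = d := by rw [mul_assoc]; exact hddc
  have hccd : c * (c * d) = c := by rw [hcd]; exact hce
  have hxc : x * c = c * x := by
    rw [hc, ← mul_assoc, hx2, mul_assoc, hx1, ← mul_assoc]
  have Pddc : ∀ t, d * (d * (c * t)) = d * t := fun t => by
    rw [← mul_assoc, ← mul_assoc, hdd2]
  have hdag : d * x = y * a * (x * d) := by
    calc d * x = d * (d * (c * x)) := (Pddc x).symm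
      _ = d * (d * (x * c)) := by rw [← hxc]
      _ = d * (d * (x * (c * (c * d)))) := by conv_lhs => rw [← hccd]
      _ = d * (d * (c * (x * (c * d)))) := by rw [lcomm hxc]
      _ = d * (d * (c * (c * (x * d))))  := by rw [lcomm hxc]
      _ = d * (c * (x * d)) := Pddc _
      _ = d * c * (x * d) := (mul_assoc _ _ _).symm
      _ = y * a * (x * d) := by rw [hdc]
  have hex : (y * a) * x = x * (y * a) := by
    rw [← hcd]
    calc c * d * x = c * (d * x) := mul_assoc _ _ _
      _ = c * (y * a * (x * d)) := by rw [hdag]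
      _ = c * (y * a) * (x * d) := (mul_assoc _ _ _).symm
      _ = c * (x * d) := by rw [hce]
      _ = x * c * d := by rw [← mul_assoc, ← hxc, mul_assoc]
      _ = x * (c * d) := mul_assoc _ _ _
  have hxd : x * d = d * x := by
    conv_lhs => rw [← hed]
    rw [← mul_assoc, ← hex, mul_assoc, ← hdag]
  have hda' : d * star a = y := by
    rw [hd, mul_assoc, hS4, ← mul_assoc, ha2]
  rw [← hda', ← mul_assoc, hxd, mul_assoc, hx2, ← mul_assoc]

end helpers

variable {A : Type*} [NormedRing A] [StarRing A] [CStarRing A] [CompleteSpace A]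
  [NormedAlgebra ℂ A] [StarModule ℂ A]

theorem stmt19 (a ad b bd : A) (ha : IsMP a ad) (hb : IsMP b bd)
    (h1 : a * b = b * a) (h2 : a * star b = star b * a) :
    IsMP (star a * b) (bd * star ad) ∧ bd * star ad = star ad * bd ∧
      IsMP (b * star a) (bd * star ad) := by
  -- basic commutations between the letters of the two "groups"
  have c1 : b * a = a * b := h1.symm
  have c2 : b * star a = star a * b := by
    have := congrArg star h2; simpa [star_mul] using this
  have c3 : star b * a = a * star b := h2.symm
  have c4 : star b * star a = star a * star b := by
    have := congrArg star h1; simpa [star_mul] using this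
  have c5 : b * ad = ad * b := comm_mp ha c1 c2
  have c6 : star b * ad = ad * star b := comm_mp ha c3 c4
  have c7 : b * star ad = star ad * b := comm_mp (isMP_star ha) c2 (by simpa using c1)
  have c8 : star b * star ad = star ad * star b :=
    comm_mp (isMP_star ha) c4 (by simpa using c3)
  have d1 : a * bd = bd * a := comm_mp hb h1 h2
  have d2 : star a * bd = bd * star a := comm_mp hb c2.symm c4.symm
  have d3 : a * star bd = star bd * a := comm_mp (isMP_star hb) h2 (by simpa using h1)
  have d4 : star a * star bd = star bd * star a :=
    comm_mp (isMP_star hb) c4.symm (by simpa using c2.symm)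
  have d5 : ad * bd = bd * ad := comm_mp hb c5.symm c6.symm
  have d6 : star ad * bd = bd * star ad := comm_mp hb c7.symm c8.symm
  have d7 : ad * star bd = star bd * ad :=
    comm_mp (isMP_star hb) c6.symm (by simpa using c5.symm)
  have d8 : star ad * star bd = star bd * star ad :=
    comm_mp (isMP_star hb) c8.symm (by simpa using c7.symm)
  -- reduction lemmas on each group
  have hsa := isMP_star ha
  have hsb := isMP_star hb
  have ha3 : star (ad * a) = ad * a := ha.2.2.1
  have ha4 : star (a * ad) = a * ad := ha.2.2.2
  have hb3 : star (bd * b) = bd * b := hb.2.2.1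
  have hb4 : star (b * bd) = b * bd := hb.2.2.2
  have hS3A : star a * star ad = ad * a := by rw [← star_mul, ha3]
  have hS4A : star ad * star a = a * ad := by rw [← star_mul, ha4]
  have hS3B : star b * star bd = bd * b := by rw [← star_mul, hb3]
  have hS4B : star bd * star b = b * bd := by rw [← star_mul, hb4]
  have G1A : ad * a * star a = star a := by
    rw [show ad * a = star a * star ad from by rw [← star_mul, ha3]]; exact hsa.1
  have G2A : a * ad * star ad = star ad := by
    rw [show a * ad = star ad * star a from by rw [← star_mul, ha4]]; exact hsa.2.1
  have G1B : bd * b * star b = star b := by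
    rw [show bd * b = star b * star bd from by rw [← star_mul, hb3]]; exact hsb.1
  have G2B : b * bd * star bd = star bd := by
    rw [show b * bd = star bd * star b from by rw [← star_mul, hb4]]; exact hsb.2.1
  refine ⟨⟨?_, ?_, ?_, ?_⟩, d6.symm, ⟨?_, ?_, ?_, ?_⟩⟩ <;>
    simp only [star_mul, star_star, mul_assoc,
      c1, two' c1, c2, two' c2, c3, two' c3, c4, two' c4,
      c5, two' c5, c6, two' c6, c7, two' c7, c8, two' c8,
      d1.symm, two' d1.symm, d2.symm, two' d2.symm, d3.symm, two' d3.symm,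
      d4.symm, two' d4.symm, d5.symm, two' d5.symm, d6.symm, two' d6.symm,
      d7.symm, two' d7.symm, d8.symm, two' d8.symm,
      hS3A, two' hS3A, hS4A, two' hS4A, hS3B, two' hS3B, hS4B, two' hS4B,
      tri' G1A, tri G1A, tri' G2A, tri G2A, tri' G1B, tri G1B, tri' G2B, tri G2B,
      tri' ha.1, tri ha.1, tri' ha.2.1, tri ha.2.1,
      tri' hb.1, tri hb.1, tri' hb.2.1, tri hb.2.1]
end
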